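/- Let A (n×n), B (n×m), C (p×n), K̄, K̲ (m×n), L̄, L̲ (n×p) be real matrices. The extended closed-loop matrix T = [[A, BK̄, BK̲], [L̄C, A − L̄C + BK̄, BK̲], [L̲C, BK̄, A − L̲C + BK̲]] is similar to the block upper-triangular matrix G = [[A + B(K̄ + K̲), BK̄, −BK̲], [0, A − L̄C, 0], [0, 0, A − L̲C]] (via the change of coordinates (x, x̄, x̲) ↦ (x, x̄ − x, x − x̲)); consequently T is Schur stable if and only if the three matrices A + B(K̄ + K̲), A − L̄C, and A − L̲C are all Schur stable. -/

import Mathlib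

open Matrix

/-- A real square matrix is Schur stable if its spectral radius (computed over ℂ) is
strictly less than one. -/
def IsSchur {ι : Type*} [Fintype ι] [DecidableEq ι] (M : Matrix ι ι ℝ) : Prop :=
  spectralRadius ℂ (M.map (algebraMap ℝ ℂ)) < 1

/-- A `3 × 3` block matrix with square blocks of size `n`. -/
def blocks3 {n : ℕ} (M11 M12 M13 M21 M22 M23 M31 M32 M33 : Matrix (Fin n) (Fin n) ℝ) :
    Matrix (Fin n ⊕ (Fin n ⊕ Fin n)) (Fin n ⊕ (Fin n ⊕ Fin n)) ℝ :=
  Matrix.of fun i j =>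
    Sum.elim
      (fun i₁ => Sum.elim (M11 i₁) (Sum.elim (M12 i₁) (M13 i₁)) j)
      (Sum.elim
        (fun i₂ => Sum.elim (M21 i₂) (Sum.elim (M22 i₂) (M23 i₂)) j)
        (fun i₃ => Sum.elim (M31 i₃) (Sum.elim (M32 i₃) (M33 i₃)) j)) i

section Blk

variable {n : ℕ} {α : Type*}

/-- Generic version of `blocks3` over an arbitrary coefficient type. -/
def blk (M11 M12 M13 M21 M22 M23 M31 M32 M33 : Matrix (Fin n) (Fin n) α) :
    Matrix (Fin n ⊕ (Fin n ⊕ Fin n)) (Fin n ⊕ (Fin n ⊕ Fin n)) α :=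
  Matrix.of fun i j =>
    Sum.elim
      (fun i₁ => Sum.elim (M11 i₁) (Sum.elim (M12 i₁) (M13 i₁)) j)
      (Sum.elim
        (fun i₂ => Sum.elim (M21 i₂) (Sum.elim (M22 i₂) (M23 i₂)) j)
        (fun i₃ => Sum.elim (M31 i₃) (Sum.elim (M32 i₃) (M33 i₃)) j)) i

lemma blocks3_eq_blk (M11 M12 M13 M21 M22 M23 M31 M32 M33 : Matrix (Fin n) (Fin n) ℝ) :
    blocks3 M11 M12 M13 M21 M22 M23 M31 M32 M33 =
      blk M11 M12 M13 M21 M22 M23 M31 M32 M33 := rfl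

lemma blk_eq_fromBlocks (M11 M12 M13 M21 M22 M23 M31 M32 M33 : Matrix (Fin n) (Fin n) α) :
    blk M11 M12 M13 M21 M22 M23 M31 M32 M33 =
      fromBlocks M11 (fromCols M12 M13) (fromRows M21 M31)
        (fromBlocks M22 M23 M32 M33) := by
  ext (i | i | i) (j | j | j) <;> rfl

lemma blk_mul [CommRing α] (A11 A12 A13 A21 A22 A23 A31 A32 A33
    B11 B12 B13 B21 B22 B23 B31 B32 B33 : Matrix (Fin n) (Fin n) α) :
    blk A11 A12 A13 A21 A22 A23 A31 A32 A33 * blk B11 B12 B13 B21 B22 B23 B31 B32 B33 =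
      blk (A11*B11 + A12*B21 + A13*B31) (A11*B12 + A12*B22 + A13*B32) (A11*B13 + A12*B23 + A13*B33)
          (A21*B11 + A22*B21 + A23*B31) (A21*B12 + A22*B22 + A23*B32) (A21*B13 + A22*B23 + A23*B33)
          (A31*B11 + A32*B21 + A33*B31) (A31*B12 + A32*B22 + A33*B32) (A31*B13 + A32*B23 + A33*B33) := by
  ext (i | i | i) (j | j | j) <;>
    simp [blk, mul_apply, Fintype.sum_sum_type, Finset.sum_add_distrib] <;> ring

lemma blk_one [CommRing α] [DecidableEq α] :
    (1 : Matrix (Fin n ⊕ (Fin n ⊕ Fin n)) (Fin n ⊕ (Fin n ⊕ Fin n)) α) =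
      blk 1 0 0 0 1 0 0 0 1 := by
  ext (i | i | i) (j | j | j) <;> simp [blk, one_apply]

lemma blk_congr {a1 a2 a3 a4 a5 a6 a7 a8 a9 b1 b2 b3 b4 b5 b6 b7 b8 b9 :
    Matrix (Fin n) (Fin n) α}
    (h1 : a1 = b1) (h2 : a2 = b2) (h3 : a3 = b3) (h4 : a4 = b4) (h5 : a5 = b5)
    (h6 : a6 = b6) (h7 : a7 = b7) (h8 : a8 = b8) (h9 : a9 = b9) :
    blk a1 a2 a3 a4 a5 a6 a7 a8 a9 = blk b1 b2 b3 b4 b5 b6 b7 b8 b9 := by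
  subst h1 h2 h3 h4 h5 h6 h7 h8 h9; rfl

lemma blk_map {β : Type*} (f : α → β)
    (M11 M12 M13 M21 M22 M23 M31 M32 M33 : Matrix (Fin n) (Fin n) α) :
    (blk M11 M12 M13 M21 M22 M23 M31 M32 M33).map f =
      blk (M11.map f) (M12.map f) (M13.map f) (M21.map f) (M22.map f) (M23.map f)
        (M31.map f) (M32.map f) (M33.map f) := by
  ext (i | i | i) (j | j | j) <;> rfl

lemma blk_smul_one_sub [CommRing α] [DecidableEq α] (z : α)
    (M11 M12 M13 M21 M22 M23 M31 M32 M33 : Matrix (Fin n) (Fin n) α) :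
    z • (1 : Matrix (Fin n ⊕ (Fin n ⊕ Fin n)) (Fin n ⊕ (Fin n ⊕ Fin n)) α) -
        blk M11 M12 M13 M21 M22 M23 M31 M32 M33 =
      blk (z • 1 - M11) (-M12) (-M13) (-M21) (z • 1 - M22) (-M23)
        (-M31) (-M32) (z • 1 - M33) := by
  ext (i | i | i) (j | j | j) <;> simp [blk, one_apply]

lemma blk_det_triangular [CommRing α] (U X Y V W : Matrix (Fin n) (Fin n) α) :
    (blk U V W 0 X 0 0 0 Y).det = U.det * X.det * Y.det := by
  rw [blk_eq_fromBlocks]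
  have h0 : (fromRows (0 : Matrix (Fin n) (Fin n) α) 0 :
      Matrix (Fin n ⊕ Fin n) (Fin n) α) = 0 := by
    ext (i | i) j <;> rfl
  rw [h0, det_fromBlocks_zero₂₁, det_fromBlocks_zero₂₁, mul_assoc]

lemma mem_spectrum_iff_det {ι : Type*} [Fintype ι] [DecidableEq ι]
    (M : Matrix ι ι ℂ) (z : ℂ) :
    z ∈ spectrum ℂ M ↔ (z • (1 : Matrix ι ι ℂ) - M).det = 0 := by
  rw [spectrum.mem_iff, Algebra.algebraMap_eq_smul_one, Matrix.isUnit_iff_isUnit_det,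
    isUnit_iff_ne_zero, not_ne_iff]

lemma spectrum_blk_triangular (U X Y V W : Matrix (Fin n) (Fin n) ℂ) :
    spectrum ℂ (blk U V W 0 X 0 0 0 Y) =
      spectrum ℂ U ∪ spectrum ℂ X ∪ spectrum ℂ Y := by
  ext z
  simp only [Set.mem_union, mem_spectrum_iff_det]
  rw [blk_smul_one_sub]
  have : blk (z • 1 - U) (-V) (-W) (-0) (z • 1 - X) (-0) (-0) (-0) (z • 1 - Y)
      = blk (z • 1 - U) (-V) (-W) 0 (z • 1 - X) 0 0 0 (z • 1 - Y) := by
    rw [neg_zero]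
  rw [this, blk_det_triangular, mul_eq_zero, mul_eq_zero, or_assoc]

end Blk

/-- The extended closed-loop matrix `T` is similar (via the change of coordinates
`(x, x̄, x̲) ↦ (x, x̄ − x, x − x̲)`) to the block upper-triangular matrix `G`; consequently
`T` is Schur stable iff `A + B(K̄ + K̲)`, `A − L̄C` and `A − L̲C` are all Schur stable. -/
theorem extended_matrix_similar_and_schur_iff {n m p : ℕ}
    (A : Matrix (Fin n) (Fin n) ℝ) (B : Matrix (Fin n) (Fin m) ℝ)
    (C : Matrix (Fin p) (Fin n) ℝ)
    (Ku Kl : Matrix (Fin m) (Fin n) ℝ) (Lu Ll : Matrix (Fin n) (Fin p) ℝ) :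
    (∃ S : Matrix (Fin n ⊕ (Fin n ⊕ Fin n)) (Fin n ⊕ (Fin n ⊕ Fin n)) ℝ,
        IsUnit S.det ∧
        blocks3 (A + B * (Ku + Kl)) (B * Ku) (-(B * Kl))
                0 (A - Lu * C) 0
                0 0 (A - Ll * C) =
          S * blocks3 A (B * Ku) (B * Kl)
                (Lu * C) (A - Lu * C + B * Ku) (B * Kl)
                (Ll * C) (B * Ku) (A - Ll * C + B * Kl) * S⁻¹) ∧
    (IsSchur (blocks3 A (B * Ku) (B * Kl)
              (Lu * C) (A - Lu * C + B * Ku) (B * Kl)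
              (Ll * C) (B * Ku) (A - Ll * C + B * Kl)) ↔
      (IsSchur (A + B * (Ku + Kl)) ∧ IsSchur (A - Lu * C) ∧ IsSchur (A - Ll * C))) := by
  set S : Matrix (Fin n ⊕ (Fin n ⊕ Fin n)) (Fin n ⊕ (Fin n ⊕ Fin n)) ℝ :=
    blk 1 0 0 (-1) 1 0 1 0 (-1) with hS
  set Sinv : Matrix (Fin n ⊕ (Fin n ⊕ Fin n)) (Fin n ⊕ (Fin n ⊕ Fin n)) ℝ :=
    blk 1 0 0 1 1 0 1 0 (-1) with hSinv
  have hSS : S * Sinv = 1 := by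
    rw [hS, hSinv, blk_mul, blk_one]
    exact blk_congr (by (try simp only [Matrix.mul_add]); noncomm_ring) (by first | noncomm_ring | (rw [Matrix.mul_add])) (by first | noncomm_ring | (rw [Matrix.mul_add])) (by first | noncomm_ring | (rw [Matrix.mul_add]))
      (by (try simp only [Matrix.mul_add]); noncomm_ring) (by first | noncomm_ring | (rw [Matrix.mul_add])) (by first | noncomm_ring | (rw [Matrix.mul_add])) (by first | noncomm_ring | (rw [Matrix.mul_add])) (by first | noncomm_ring | (rw [Matrix.mul_add]))
  have hSS' : Sinv * S = 1 := by
    rw [hS, hSinv, blk_mul, blk_one]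
    exact blk_congr (by (try simp only [Matrix.mul_add]); noncomm_ring) (by first | noncomm_ring | (rw [Matrix.mul_add])) (by first | noncomm_ring | (rw [Matrix.mul_add])) (by first | noncomm_ring | (rw [Matrix.mul_add]))
      (by (try simp only [Matrix.mul_add]); noncomm_ring) (by first | noncomm_ring | (rw [Matrix.mul_add])) (by first | noncomm_ring | (rw [Matrix.mul_add])) (by first | noncomm_ring | (rw [Matrix.mul_add])) (by first | noncomm_ring | (rw [Matrix.mul_add]))
  have hsim : blocks3 (A + B * (Ku + Kl)) (B * Ku) (-(B * Kl))
                0 (A - Lu * C) 0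
                0 0 (A - Ll * C) =
          S * blocks3 A (B * Ku) (B * Kl)
                (Lu * C) (A - Lu * C + B * Ku) (B * Kl)
                (Ll * C) (B * Ku) (A - Ll * C + B * Kl) * Sinv := by
    rw [blocks3_eq_blk, blocks3_eq_blk, hS, hSinv, blk_mul, blk_mul]
    exact blk_congr (by (try simp only [Matrix.mul_add]); noncomm_ring) (by first | noncomm_ring | (rw [Matrix.mul_add])) (by first | noncomm_ring | (rw [Matrix.mul_add])) (by first | noncomm_ring | (rw [Matrix.mul_add]))
      (by (try simp only [Matrix.mul_add]); noncomm_ring) (by first | noncomm_ring | (rw [Matrix.mul_add])) (by first | noncomm_ring | (rw [Matrix.mul_add])) (by first | noncomm_ring | (rw [Matrix.mul_add])) (by first | noncomm_ring | (rw [Matrix.mul_add]))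
  constructor
  · refine ⟨S, ?_, ?_⟩
    · exact IsUnit.of_mul_eq_one _ (by rw [← det_mul, hSS, det_one])
    · rw [Matrix.inv_eq_left_inv hSS']
      exact hsim
  · -- spectral part
    set φ := (algebraMap ℝ ℂ)
    -- map everything to ℂ
    have hm : ∀ (X Y : Matrix (Fin n ⊕ (Fin n ⊕ Fin n)) (Fin n ⊕ (Fin n ⊕ Fin n)) ℝ),
        (X * Y).map φ = X.map φ * Y.map φ := fun X Y => Matrix.map_mul
    have hone : ((1 : Matrix (Fin n ⊕ (Fin n ⊕ Fin n)) (Fin n ⊕ (Fin n ⊕ Fin n)) ℝ)).map φ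
        = 1 := Matrix.map_one φ (map_zero φ) (map_one φ)
    set Tc := ((blocks3 A (B * Ku) (B * Kl)
              (Lu * C) (A - Lu * C + B * Ku) (B * Kl)
              (Ll * C) (B * Ku) (A - Ll * C + B * Kl)).map φ) with hTc
    have hGc : ((blocks3 (A + B * (Ku + Kl)) (B * Ku) (-(B * Kl))
                0 (A - Lu * C) 0
                0 0 (A - Ll * C)).map φ) = S.map φ * Tc * Sinv.map φ := by
      rw [hsim, hm, hm]
    have hu1 : S.map φ * Sinv.map φ = 1 := by rw [← hm, hSS, hone]
    have hu2 : Sinv.map φ * S.map φ = 1 := by rw [← hm, hSS', hone]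
    set u : (Matrix (Fin n ⊕ (Fin n ⊕ Fin n)) (Fin n ⊕ (Fin n ⊕ Fin n)) ℂ)ˣ :=
      ⟨S.map φ, Sinv.map φ, hu1, hu2⟩ with hu
    have hspec : spectrum ℂ Tc =
        spectrum ℂ ((A + B * (Ku + Kl)).map φ) ∪ spectrum ℂ ((A - Lu * C).map φ) ∪
          spectrum ℂ ((A - Ll * C).map φ) := by
      have h1 : spectrum ℂ ((S.map φ) * Tc * (Sinv.map φ)) = spectrum ℂ Tc :=
        spectrum.units_conjugate (u := u)
      rw [← h1, ← hGc, blocks3_eq_blk, blk_map]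
      rw [show ((0 : Matrix (Fin n) (Fin n) ℝ)).map φ = 0 from Matrix.map_zero φ (map_zero φ)]
      exact spectrum_blk_triangular _ _ _ _ _
    simp only [IsSchur]
    rw [← hTc, spectralRadius, spectralRadius, spectralRadius, spectralRadius, hspec]
    rw [iSup_union, iSup_union, sup_lt_iff, sup_lt_iff]
    tauto
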